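/- (Chernoff bound for random stopping times.) Let (Ω, F, P) be a probability space with a filtration (F_t)_{t≥1}, and let (x_t)_{t≥1} and (y_t)_{t≥1} be sequences of nonnegative integrable real random variables adapted to the filtration. Let T be a stopping time with finite expectation, and set X = Σ_{t=1}^T x_t and Y = Σ_{t=1}^T y_t. Suppose that for every t ≥ 1, almost surely: |x_t − y_t| ≤ 1 and E[x_t − y_t | F_{t−1}] ≤ 0. Then for every ε ∈ [0,1] and every A ∈ ℝ: P[(1−ε)X ≥ Y + A] ≤ exp(−εA). -/

import Mathlib

open MeasureTheory

lemma chernoff_bernoulli {z p : ℝ} (hz : 0 ≤ z) (hp0 : 0 ≤ p) (hp1 : p ≤ 1) :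
    z ^ p ≤ p * z + (1 - p) := by
  have h := Real.geom_mean_le_arith_mean2_weighted (w₁ := p) (w₂ := 1 - p) (p₁ := z) (p₂ := 1)
    hp0 (by linarith) hz zero_le_one (by ring)
  simpa using h

lemma chernoff_pointwise {ε x y : ℝ} (hε0 : 0 ≤ ε) (hε1 : ε < 1)
    (hx : 0 ≤ x) (hy : 0 ≤ y) (hxy : |x - y| ≤ 1) :
    Real.exp (Real.log (1 + ε) * x + Real.log (1 - ε) * y) ≤ 1 + ε * (x - y) := by
  have h1ε : (0:ℝ) < 1 + ε := by linarith
  have h1ε' : (0:ℝ) < 1 - ε := by linarith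
  have ha : 0 ≤ Real.log (1 + ε) := Real.log_nonneg (by linarith)
  have hb : Real.log (1 - ε) ≤ 0 := Real.log_nonpos (by linarith) (by linarith)
  have hab : Real.log (1 + ε) + Real.log (1 - ε) ≤ 0 := by
    rw [← Real.log_mul (by positivity) (by positivity)]
    exact Real.log_nonpos (by nlinarith) (by nlinarith)
  rcases abs_le.1 hxy with ⟨hd1, hd2⟩
  rcases le_total y x with hyx | hyx
  · have key : Real.log (1 + ε) * x + Real.log (1 - ε) * y
        ≤ Real.log (1 + ε) * (x - y) := by nlinarith
    calc Real.exp (Real.log (1 + ε) * x + Real.log (1 - ε) * y)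
        ≤ Real.exp (Real.log (1 + ε) * (x - y)) := Real.exp_le_exp.2 key
      _ = (1 + ε) ^ (x - y) := by rw [Real.rpow_def_of_pos h1ε, mul_comm]
      _ ≤ (x - y) * (1 + ε) + (1 - (x - y)) :=
          chernoff_bernoulli h1ε.le (by linarith) hd2
      _ ≤ 1 + ε * (x - y) := by nlinarith
  · have key : Real.log (1 + ε) * x + Real.log (1 - ε) * y
        ≤ Real.log (1 - ε) * (y - x) := by nlinarith
    calc Real.exp (Real.log (1 + ε) * x + Real.log (1 - ε) * y)
        ≤ Real.exp (Real.log (1 - ε) * (y - x)) := Real.exp_le_exp.2 key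
      _ = (1 - ε) ^ (y - x) := by rw [Real.rpow_def_of_pos h1ε', mul_comm]
      _ ≤ (y - x) * (1 - ε) + (1 - (y - x)) :=
          chernoff_bernoulli h1ε'.le (by linarith) (by linarith)
      _ ≤ 1 + ε * (x - y) := by nlinarith

lemma chernoff_coeff {ε : ℝ} (hε0 : 0 ≤ ε) (hε1 : ε < 1) :
    0 ≤ Real.log (1 + ε) + (1 - ε) * Real.log (1 - ε) := by
  have h1ε : (0:ℝ) < 1 + ε := by linarith
  have h1ε' : (0:ℝ) < 1 - ε := by linarith
  have h := chernoff_bernoulli (z := (1 - ε)⁻¹) (p := 1 - ε)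
    (by positivity) (by linarith) (by linarith)
  have h2 : (1 - ε) * (1 - ε)⁻¹ + (1 - (1 - ε)) = 1 + ε := by
    field_simp
    ring
  rw [h2] at h
  have hpos : (0:ℝ) < (1 - ε)⁻¹ ^ (1 - ε) := Real.rpow_pos_of_pos (by positivity) _
  have hlog := Real.log_le_log hpos h
  rw [Real.log_rpow (by positivity), Real.log_inv] at hlog
  nlinarith

lemma chernoff_measurable_stoppedValue {Ω : Type*} [MeasurableSpace Ω]
    {f : ℕ → Ω → ℝ} (hf : ∀ n, Measurable (f n)) {σ : Ω → WithTop ℕ} (hσ : Measurable σ) :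
    Measurable (stoppedValue f σ) := by
  have : stoppedValue f σ = (fun p : Ω × ℕ => f p.2 p.1) ∘ fun ω => (ω, (σ ω).untopA) := rfl
  rw [this]
  exact (measurable_from_prod_countable_left fun n => hf n).comp (measurable_id.prodMk hσ.untopA)

theorem chernoff_random_stopping_time
    {Ω : Type*} {m : MeasurableSpace Ω} {P : Measure Ω} [IsProbabilityMeasure P]
    (F : Filtration ℕ m) (x y : ℕ → Ω → ℝ)
    (hxmeas : ∀ t : ℕ, 1 ≤ t → StronglyMeasurable[F t] (x t))
    (hymeas : ∀ t : ℕ, 1 ≤ t → StronglyMeasurable[F t] (y t))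
    (hxint : ∀ t : ℕ, 1 ≤ t → Integrable (x t) P)
    (hyint : ∀ t : ℕ, 1 ≤ t → Integrable (y t) P)
    (hxpos : ∀ t : ℕ, 1 ≤ t → ∀ᵐ ω ∂P, 0 ≤ x t ω)
    (hypos : ∀ t : ℕ, 1 ≤ t → ∀ᵐ ω ∂P, 0 ≤ y t ω)
    (hdiff : ∀ t : ℕ, 1 ≤ t → ∀ᵐ ω ∂P, |x t ω - y t ω| ≤ 1)
    (hcond : ∀ t : ℕ, 1 ≤ t → ∀ᵐ ω ∂P, (P[x t - y t|F (t - 1)]) ω ≤ 0)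
    (T : Ω → ℕ) (hT : IsStoppingTime F (fun ω => (T ω : WithTop ℕ)))
    (hTint : Integrable (fun ω => (T ω : ℝ)) P)
    (ε : ℝ) (hε0 : 0 ≤ ε) (hε1 : ε ≤ 1) (A : ℝ) :
    P {ω | (∑ t ∈ Finset.Icc 1 (T ω), y t ω) + A ≤
        (1 - ε) * ∑ t ∈ Finset.Icc 1 (T ω), x t ω} ≤
      ENNReal.ofReal (Real.exp (-ε * A)) := by
  classical
  -- trivial case `A ≤ 0`
  rcases le_or_gt A 0 with hA | hA
  · refine le_trans prob_le_one ?_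
    rw [← ENNReal.ofReal_one]
    exact ENNReal.ofReal_le_ofReal (Real.one_le_exp (by nlinarith))
  rcases lt_or_eq_of_le hε1 with hε1' | hε1'
  swap
  · -- case `ε = 1`
    have hy' : ∀ᵐ ω ∂P, ∀ t, 1 ≤ t → 0 ≤ y t ω := by
      rw [MeasureTheory.ae_all_iff]
      intro t
      by_cases ht : 1 ≤ t
      · filter_upwards [hypos t ht] with ω h _ using h
      · filter_upwards with ω h using absurd h ht
    have : P {ω | (∑ t ∈ Finset.Icc 1 (T ω), y t ω) + A ≤
        (1 - ε) * ∑ t ∈ Finset.Icc 1 (T ω), x t ω} = 0 := by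
      refine measure_mono_null ?_ (ae_iff.1 hy')
      intro ω hω
      simp only [Set.mem_setOf_eq] at hω ⊢
      intro hall
      have hY : 0 ≤ ∑ t ∈ Finset.Icc 1 (T ω), y t ω :=
        Finset.sum_nonneg fun t ht => hall t (Finset.mem_Icc.1 ht).1
      rw [← hε1'] at hω
      nlinarith
    rw [this]
    exact zero_le
  -- main case `0 ≤ ε < 1`, `0 < A`
  set a := Real.log (1 + ε) with ha_def
  set b := Real.log (1 - ε) with hb_def
  have hb0 : b ≤ 0 := Real.log_nonpos (by linarith) (by linarith)
  set f : ℕ → Ω → ℝ :=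
    fun t ω => Real.exp (∑ s ∈ Finset.Icc 1 t, (a * x s ω + b * y s ω)) with hf_def
  set g : ℕ → Ω → ℝ := fun t ω => Real.exp (a * x t ω + b * y t ω) with hg_def
  have hfg : ∀ t, f (t + 1) = f t * g (t + 1) := by
    intro t
    funext ω
    simp only [hf_def, hg_def, Pi.mul_apply]
    rw [Finset.sum_Icc_succ_top (by omega : 1 ≤ t + 1), Real.exp_add]
  have hgm : ∀ t, 1 ≤ t → StronglyMeasurable[F t] (g t) := fun t ht =>
    Real.continuous_exp.comp_stronglyMeasurable
      (((hxmeas t ht).const_mul a).add ((hymeas t ht).const_mul b))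
  have hfm : ∀ t, StronglyMeasurable[F t] (f t) := by
    intro t
    refine Real.continuous_exp.comp_stronglyMeasurable ?_
    refine Finset.stronglyMeasurable_fun_sum _ fun s hs => ?_
    rcases Finset.mem_Icc.1 hs with ⟨h1, h2⟩
    exact (((hxmeas s h1).mono (F.mono h2)).const_mul a).add
      (((hymeas s h1).mono (F.mono h2)).const_mul b)
  have hgle : ∀ t, 1 ≤ t → ∀ᵐ ω ∂P, g t ω ≤ 1 + ε * (x t ω - y t ω) := by
    intro t ht
    filter_upwards [hxpos t ht, hypos t ht, hdiff t ht] with ω h1 h2 h3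
    exact chernoff_pointwise hε0 hε1' h1 h2 h3
  have hg2 : ∀ t, 1 ≤ t → ∀ᵐ ω ∂P, g t ω ≤ 2 := by
    intro t ht
    filter_upwards [hgle t ht, hdiff t ht] with ω h1 h3
    rcases abs_le.1 h3 with ⟨_, h4⟩
    nlinarith
  have hgint : ∀ t, 1 ≤ t → Integrable (g t) P := by
    intro t ht
    refine Integrable.mono' (integrable_const 2)
      ((hgm t ht).mono (F.le t)).aestronglyMeasurable ?_
    filter_upwards [hg2 t ht] with ω h
    rw [Real.norm_eq_abs, hg_def, Real.abs_exp]
    exact h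
  have hfle : ∀ t, ∀ᵐ ω ∂P, f t ω ≤ 2 ^ t := by
    intro t
    induction t with
    | zero => filter_upwards with ω; simp [hf_def]
    | succ n ih =>
      filter_upwards [ih, hg2 (n + 1) (by omega)] with ω h1 h2
      have he : f (n + 1) ω = f n ω * g (n + 1) ω := by rw [hfg n]; rfl
      rw [he]
      calc f n ω * g (n + 1) ω ≤ 2 ^ n * 2 :=
            mul_le_mul h1 h2 (Real.exp_pos _).le (by positivity)
        _ = 2 ^ (n + 1) := by ring
  have hfint : ∀ t, Integrable (f t) P := by
    intro t
    refine Integrable.mono' (integrable_const (2 ^ t))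
      ((hfm t).mono (F.le t)).aestronglyMeasurable ?_
    filter_upwards [hfle t] with ω h
    rw [Real.norm_eq_abs, hf_def, Real.abs_exp]
    exact h
  have hstep : ∀ t, P[f (t + 1)|F t] ≤ᵐ[P] f t := by
    intro t
    have ht1 : 1 ≤ t + 1 := by omega
    have hmul : P[f t * g (t + 1)|F t] =ᵐ[P] f t * P[g (t + 1)|F t] :=
      condExp_mul_of_stronglyMeasurable_left (hfm t) (by rw [← hfg]; exact hfint (t + 1))
        (hgint _ ht1)
    have hsubint : Integrable (x (t + 1) - y (t + 1)) P :=
      (hxint _ ht1).sub (hyint _ ht1)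
    have hcint : Integrable (fun ω => 1 + ε * (x (t + 1) ω - y (t + 1) ω)) P :=
      (integrable_const 1).add (hsubint.const_mul ε)
    have hmono : P[g (t + 1)|F t] ≤ᵐ[P]
        P[fun ω => 1 + ε * (x (t + 1) ω - y (t + 1) ω)|F t] :=
      condExp_mono (hgint _ ht1) hcint (hgle _ ht1)
    have heq : P[fun ω => 1 + ε * (x (t + 1) ω - y (t + 1) ω)|F t]
        =ᵐ[P] fun ω => 1 + ε * (P[x (t + 1) - y (t + 1)|F t]) ω := by
      have h1 : (fun ω => 1 + ε * (x (t + 1) ω - y (t + 1) ω))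
          = (fun _ : Ω => (1 : ℝ)) + ε • (x (t + 1) - y (t + 1)) := by
        funext ω; simp
      rw [h1]
      refine (condExp_add (integrable_const (1 : ℝ)) (hsubint.smul ε) _).trans ?_
      filter_upwards [condExp_smul (μ := P) (m := F t) ε (x (t + 1) - y (t + 1))] with ω hω
      simp only [Pi.add_apply, condExp_const (F.le t), hω, Pi.smul_apply, smul_eq_mul]
    have hle1 : P[g (t + 1)|F t] ≤ᵐ[P] fun _ => (1 : ℝ) := by
      filter_upwards [hmono, heq, hcond (t + 1) ht1] with ω h1 h2 h3
      have h3' : (P[x (t + 1) - y (t + 1)|F t]) ω ≤ 0 := h3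
      rw [h2] at h1
      nlinarith
    rw [hfg t]
    refine hmul.trans_le ?_
    filter_upwards [hle1] with ω h
    simp only [Pi.mul_apply]
    have hf0 : 0 ≤ f t ω := (Real.exp_pos _).le
    exact mul_le_of_le_one_right hf0 h
  have hsuper : Supermartingale f F P :=
    supermartingale_nat (fun t => hfm t) hfint hstep
  have hTn : ∀ n : ℕ, IsStoppingTime F fun ω => min (T ω) n := fun n => hT.min_const n
  have hstop : ∀ n : ℕ, ∫ ω, stoppedValue f (fun ω' => min (T ω') n) ω ∂P ≤ 1 := by
    intro n
    have h := hsuper.neg.expected_stoppedValue_mono (isStoppingTime_const F 0) (hTn n)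
      (fun ω => le_min (WithTop.coe_le_coe.2 (Nat.zero_le _)) (WithTop.coe_le_coe.2 (Nat.zero_le _))) (fun ω => min_le_right _ (n : WithTop ℕ))
    rw [stoppedValue_const] at h
    have he : stoppedValue (-f) (fun ω' => min (T ω') n)
        = -stoppedValue f (fun ω' => min (T ω') n) := rfl
    rw [he] at h
    simp only [Pi.neg_apply] at h
    rw [integral_neg, integral_neg] at h
    have hf0 : ∫ ω, f 0 ω ∂P = 1 := by
      have h0 : f 0 = fun _ : Ω => (1 : ℝ) := by
        funext ω
        simp [hf_def, Finset.Icc_eq_empty (by omega : ¬ (1 : ℕ) ≤ 0)]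
      rw [h0]
      simp
    rw [hf0] at h
    linarith
  have hfm' : ∀ n, Measurable (f n) := fun n => ((hfm n).mono (F.le n)).measurable
  have hTm : Measurable (fun ω => (T ω : WithTop ℕ)) := hT.measurable.mono hT.measurableSpace_le le_rfl
  have hlint : ∫⁻ ω, ENNReal.ofReal (stoppedValue f (fun ω => (T ω : WithTop ℕ)) ω) ∂P ≤ 1 := by
    have hterm : ∀ n : ℕ,
        ∫⁻ ω, ENNReal.ofReal (stoppedValue f (fun ω' => min (T ω') n) ω) ∂P ≤ 1 := by
      intro n
      rw [← ofReal_integral_eq_lintegral_ofReal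
        (integrable_stoppedValue ℕ (hTn n) hfint fun ω => min_le_right _ (n : WithTop ℕ))
        (Filter.Eventually.of_forall fun ω => (Real.exp_pos _).le)]
      exact ENNReal.ofReal_le_one.2 (hstop n)
    have hptwise : ∀ ω, Filter.Tendsto
        (fun n : ℕ => ENNReal.ofReal (stoppedValue f (fun ω' => min (T ω') n) ω))
        Filter.atTop (nhds (ENNReal.ofReal (stoppedValue f (fun ω => (T ω : WithTop ℕ)) ω))) := by
      intro ω
      refine tendsto_atTop_of_eventually_const (i₀ := T ω) fun n hn => ?_
      simp only [stoppedValue]; congr; exact min_eq_left (WithTop.coe_le_coe.2 hn)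
    calc ∫⁻ ω, ENNReal.ofReal (stoppedValue f (fun ω => (T ω : WithTop ℕ)) ω) ∂P
        = ∫⁻ ω, Filter.liminf
            (fun n : ℕ => ENNReal.ofReal (stoppedValue f (fun ω' => min (T ω') n) ω))
            Filter.atTop ∂P := by
          congr 1; funext ω; exact ((hptwise ω).liminf_eq).symm
      _ ≤ Filter.liminf
            (fun n : ℕ => ∫⁻ ω, ENNReal.ofReal (stoppedValue f (fun ω' => min (T ω') n) ω) ∂P)
            Filter.atTop :=
          lintegral_liminf_le fun n =>
            (chernoff_measurable_stoppedValue hfm' (hTn n).measurable').ennreal_ofReal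
      _ ≤ 1 := by
          refine le_trans (Filter.liminf_le_liminf (Filter.Eventually.of_forall hterm)) ?_
          simp [Filter.liminf_const]
  -- Markov
  have hx' : ∀ᵐ ω ∂P, ∀ t, 1 ≤ t → 0 ≤ x t ω := by
    rw [MeasureTheory.ae_all_iff]
    intro t
    by_cases ht : 1 ≤ t
    · filter_upwards [hxpos t ht] with ω h _ using h
    · filter_upwards with ω h using absurd h ht
  have hEsub : {ω | (∑ t ∈ Finset.Icc 1 (T ω), y t ω) + A ≤
        (1 - ε) * ∑ t ∈ Finset.Icc 1 (T ω), x t ω}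
      ⊆ {ω | ENNReal.ofReal (Real.exp (ε * A))
          ≤ ENNReal.ofReal (stoppedValue f (fun ω => (T ω : WithTop ℕ)) ω)}
        ∪ {ω | ¬ ∀ t, 1 ≤ t → 0 ≤ x t ω} := by
    intro ω hω
    by_cases hxa : ∀ t, 1 ≤ t → 0 ≤ x t ω
    · left
      simp only [Set.mem_setOf_eq] at hω ⊢
      have hX : 0 ≤ ∑ t ∈ Finset.Icc 1 (T ω), x t ω :=
        Finset.sum_nonneg fun t ht => hxa t (Finset.mem_Icc.1 ht).1
      have hsv : stoppedValue f (fun ω => (T ω : WithTop ℕ)) ω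
          = Real.exp (a * (∑ t ∈ Finset.Icc 1 (T ω), x t ω)
            + b * ∑ t ∈ Finset.Icc 1 (T ω), y t ω) := by
        simp only [stoppedValue, hf_def, WithTop.untopD_coe]
        rw [Finset.sum_add_distrib, ← Finset.mul_sum, ← Finset.mul_sum]
        rfl
      refine ENNReal.ofReal_le_ofReal ?_
      rw [hsv]
      refine Real.exp_le_exp.2 ?_
      have hcoe := chernoff_coeff hε0 hε1'
      have hblow : b ≤ -ε := by
        have := Real.log_le_sub_one_of_pos (show (0:ℝ) < 1 - ε by linarith)
        rw [hb_def]; linarith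
      set X := ∑ t ∈ Finset.Icc 1 (T ω), x t ω
      set Y := ∑ t ∈ Finset.Icc 1 (T ω), y t ω
      have h1 : 0 ≤ (a + (1 - ε) * b) * X :=
        mul_nonneg (by rw [ha_def, hb_def] at *; linarith) hX
      have h2 : b * ((1 - ε) * X - A) ≤ b * Y :=
        mul_le_mul_of_nonpos_left (by linarith) hb0
      nlinarith
    · right
      exact hxa
  refine le_trans (measure_mono hEsub) ?_
  refine le_trans (measure_union_le _ _) ?_
  rw [ae_iff.1 hx', add_zero]
  have hm := meas_ge_le_lintegral_div (μ := P)
    ((chernoff_measurable_stoppedValue hfm' hTm).ennreal_ofReal.aemeasurable)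
    (ε := ENNReal.ofReal (Real.exp (ε * A)))
    ((ENNReal.ofReal_pos.2 (Real.exp_pos _)).ne') ENNReal.ofReal_ne_top
  refine le_trans hm ?_
  calc (∫⁻ ω, ENNReal.ofReal (stoppedValue f (fun ω => (T ω : WithTop ℕ)) ω) ∂P) / ENNReal.ofReal (Real.exp (ε * A))
      ≤ 1 / ENNReal.ofReal (Real.exp (ε * A)) := ENNReal.div_le_div_right hlint _
    _ = ENNReal.ofReal (Real.exp (-ε * A)) := by
        rw [one_div, ← ENNReal.ofReal_inv_of_pos (Real.exp_pos _), ← Real.exp_neg, neg_mul]
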